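/- Let Q be a positive integer, f(X) = c_n X^n + c_{n-1} X^{n-1} + ... + c_1 X ∈ ℤ[X] with zero constant term, and let δ be a positive integer dividing gcd(c_n, ..., c_2, Q). If the complete exponential sum S = ∑_{x=1}^{Q} e(f(x)/Q) is nonzero, then δ divides c_1 and S = δ · ∑_{x=1}^{Q/δ} e((f(x)/δ)/(Q/δ)). -/

import Mathlib

open Finset

noncomputable def e (t : ℝ) : ℂ := Complex.exp (2 * Real.pi * Complex.I * t)

lemma e_add (s t : ℝ) : e (s + t) = e s * e t := by
  simp only [e, ← Complex.exp_add]
  push_cast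
  ring_nf

lemma e_int (k : ℤ) : e k = 1 := by
  have : (2 : ℂ) * Real.pi * Complex.I * ((k : ℝ) : ℂ) = (k : ℂ) * (2 * Real.pi * Complex.I) := by
    push_cast; ring
  rw [e, this, Complex.exp_int_mul_two_pi_mul_I]

lemma e_add_int (t : ℝ) (k : ℤ) : e (t + k) = e t := by
  rw [e_add, e_int, mul_one]

lemma dvd_of_e_eq_one (c : ℤ) (d : ℕ) (hd : 0 < d) (h : e ((c : ℝ) / d) = 1) : (d : ℤ) ∣ c := by
  rw [e, Complex.exp_eq_one_iff] at h
  obtain ⟨n, hn⟩ := h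
  have hπ : (2 : ℂ) * Real.pi * Complex.I ≠ 0 := by
    simp [Real.pi_ne_zero, Complex.I_ne_zero]
  have h2 : (((c : ℝ) / d : ℝ) : ℂ) = ((n : ℝ) : ℂ) := by
    rw [mul_comm] at hn
    push_cast at hn ⊢
    exact mul_right_cancel₀ hπ hn
  have h3 : (c : ℝ) / d = (n : ℝ) := Complex.ofReal_inj.mp h2
  have hd' : (d : ℝ) ≠ 0 := Nat.cast_ne_zero.mpr hd.ne'
  have hcr : (c : ℝ) = (n : ℝ) * d := by field_simp at h3; linarith
  have hcz : c = n * d := by exact_mod_cast hcr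
  exact ⟨n, by linarith⟩

lemma Icc_one_eq_Ioc (n : ℕ) : Finset.Icc 1 n = Finset.Ioc 0 n := by
  rw [← Finset.Icc_add_one_left_eq_Ioc]; rfl

lemma sum_shift (F : ℕ → ℂ) (Q m : ℕ) (hm : m ≤ Q) (hp : ∀ x, F (x + Q) = F x) :
    ∑ x ∈ Icc 1 Q, F (x + m) = ∑ x ∈ Icc 1 Q, F x := by
  rw [Icc_one_eq_Ioc]
  have h1 : ∑ x ∈ Ioc 0 Q, F (x + m) = ∑ x ∈ Ioc m (Q + m), F x := by
    have h : Finset.Ioc m (Q + m) = Finset.map (addRightEmbedding m) (Finset.Ioc 0 Q) := by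
      rw [Finset.map_add_right_Ioc]; congr 1 <;> omega
    rw [h, Finset.sum_map]
    simp [addRightEmbedding_apply]
  have h3 : ∑ x ∈ Ioc Q (Q + m), F x = ∑ x ∈ Ioc 0 m, F x := by
    have h : Finset.Ioc Q (Q + m) = Finset.map (addRightEmbedding Q) (Finset.Ioc 0 m) := by
      rw [Finset.map_add_right_Ioc]; congr 1 <;> omega
    rw [h, Finset.sum_map]
    exact Finset.sum_congr rfl fun x _ => by rw [addRightEmbedding_apply, hp]
  have h2 := Finset.sum_Ioc_consecutive F hm (Nat.le_add_right Q m)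
  have h4 := Finset.sum_Ioc_consecutive F (Nat.zero_le m) hm
  rw [h1, ← h2, h3, ← h4]
  ring

lemma sum_blocks (F : ℕ → ℂ) (m : ℕ) (hp : ∀ x, F (x + m) = F x) (k : ℕ) :
    ∑ x ∈ Icc 1 (k * m), F x = (k : ℂ) * ∑ x ∈ Icc 1 m, F x := by
  have hp' : ∀ j x, F (x + j * m) = F x := by
    intro j
    induction j with
    | zero => simp
    | succ j ih => intro x; rw [Nat.succ_mul, ← Nat.add_assoc, hp, ih]
  simp only [Icc_one_eq_Ioc]
  induction k with
  | zero => simp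
  | succ k ih =>
    have hle : k * m ≤ (k + 1) * m := by nlinarith
    have hsplit := Finset.sum_Ioc_consecutive F (Nat.zero_le (k * m)) hle
    have hlast : ∑ x ∈ Ioc (k * m) ((k + 1) * m), F x = ∑ x ∈ Ioc 0 m, F x := by
      have h : Finset.Ioc (k * m) ((k + 1) * m)
          = Finset.map (addRightEmbedding (k * m)) (Finset.Ioc 0 m) := by
        rw [Finset.map_add_right_Ioc]; congr 1 <;> ring
      rw [h, Finset.sum_map]
      exact Finset.sum_congr rfl fun x _ => by rw [addRightEmbedding_apply, hp']
    rw [← hsplit, hlast, ih]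
    push_cast
    ring

theorem expsum_reduce (Q δ : ℕ) (hQ : 0 < Q) (hδ : 0 < δ)
    (f : Polynomial ℤ) (hf0 : f.coeff 0 = 0)
    (hdvd : ∀ i, 2 ≤ i → (δ : ℤ) ∣ f.coeff i) (hδQ : δ ∣ Q)
    (hS : (∑ x ∈ Icc 1 Q, e (((f.eval (x : ℤ) : ℤ) : ℝ) / Q)) ≠ 0) :
    (δ : ℤ) ∣ f.coeff 1 ∧
      (∑ x ∈ Icc 1 Q, e (((f.eval (x : ℤ) : ℤ) : ℝ) / Q)) =
        (δ : ℂ) * ∑ x ∈ Icc 1 (Q / δ),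
          e (((f.eval (x : ℤ) / (δ : ℤ) : ℤ) : ℝ) / ((Q / δ : ℕ) : ℝ)) := by
  set m := Q / δ with hm_def
  have hQm : Q = δ * m := (Nat.mul_div_cancel' hδQ).symm
  have hm : 0 < m := Nat.div_pos (Nat.le_of_dvd hQ hδQ) hδ
  have hQ0 : (Q : ℝ) ≠ 0 := Nat.cast_ne_zero.mpr hQ.ne'
  have hm0 : (m : ℝ) ≠ 0 := Nat.cast_ne_zero.mpr hm.ne'
  have hδ0 : (δ : ℝ) ≠ 0 := Nat.cast_ne_zero.mpr hδ.ne'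
  set c := f.coeff 1 with hc_def
  set F : ℕ → ℂ := fun x => e (((f.eval (x : ℤ) : ℤ) : ℝ) / Q) with hF_def
  have hpc : ∀ i, (δ : ℤ) ∣ (f - Polynomial.C c * Polynomial.X).coeff i := by
    intro i
    match i with
    | 0 => simp [hf0]
    | 1 => simp [hc_def]
    | (n + 2) =>
      simp only [Polynomial.coeff_sub, Polynomial.coeff_C_mul, Polynomial.coeff_X]
      have hne : (n + 2 : ℕ) ≠ 1 := by omega
      simp [hne]
      exact hdvd _ (by omega)
  obtain ⟨q, hq⟩ := (Polynomial.C_dvd_iff_dvd_coeff ((δ : ℤ)) _).mpr hpc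
  have heval : ∀ x : ℤ, f.eval x = c * x + (δ : ℤ) * q.eval x := by
    intro x
    have h := congrArg (Polynomial.eval x) hq
    simp at h
    linarith
  have key : ∀ x : ℤ, ∃ k : ℤ, f.eval (x + m) = f.eval x + c * m + Q * k := by
    intro x
    obtain ⟨k, hk⟩ : (m : ℤ) ∣ q.eval (x + m) - q.eval x :=
      dvd_trans ⟨1, by ring⟩ (Polynomial.sub_dvd_eval_sub (x + (m : ℤ)) x q)
    refine ⟨k, ?_⟩
    rw [heval, heval, hQm]
    have h : q.eval (x + (m : ℤ)) = q.eval x + m * k := by linarith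
    rw [h]
    push_cast
    ring
  have hFQ : ∀ x : ℕ, F (x + Q) = F x := by
    intro x
    obtain ⟨k, hk⟩ : (Q : ℤ) ∣ f.eval ((x : ℤ) + Q) - f.eval (x : ℤ) :=
      dvd_trans ⟨1, by ring⟩ (Polynomial.sub_dvd_eval_sub ((x : ℤ) + Q) (x : ℤ) f)
    have hk' : f.eval ((x : ℤ) + Q) = f.eval (x : ℤ) + Q * k := by linarith
    simp only [hF_def]
    push_cast [hk']
    have h : (((f.eval (x : ℤ) : ℤ) : ℝ) + Q * k) / Q = ((f.eval (x : ℤ) : ℤ) : ℝ) / Q + k := by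
      field_simp
    rw [h, e_add_int]
  have hpoint : ∀ x : ℕ, F (x + m) = e ((c : ℝ) / δ) * F x := by
    intro x
    obtain ⟨k, hk⟩ := key (x : ℤ)
    simp only [hF_def]
    push_cast [hk]
    have h1 : (((f.eval (x : ℤ) : ℤ) : ℝ) + c * m + Q * k) / Q
        = (((f.eval (x : ℤ) : ℤ) : ℝ) / Q + (c : ℝ) / δ) + k := by
      rw [hQm]
      push_cast
      field_simp
    rw [h1, e_add_int, e_add, mul_comm]
  have hS1 : ∑ x ∈ Icc 1 Q, F x = e ((c : ℝ) / δ) * ∑ x ∈ Icc 1 Q, F x := by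
    conv_lhs => rw [← sum_shift F Q m (by rw [hQm]; nlinarith) hFQ]
    rw [Finset.mul_sum]
    exact Finset.sum_congr rfl fun x _ => hpoint x
  have he1 : e ((c : ℝ) / δ) = 1 := by
    by_contra hne
    apply hS
    have h2 : (1 - e ((c : ℝ) / δ)) * ∑ x ∈ Icc 1 Q, F x = 0 := by
      linear_combination hS1
    rcases mul_eq_zero.mp h2 with h | h
    · exact absurd (by linear_combination -h) hne
    · exact h
  have hc1 : (δ : ℤ) ∣ c := dvd_of_e_eq_one c δ hδ he1
  refine ⟨hc1, ?_⟩
  have hall : ∀ i, (δ : ℤ) ∣ f.coeff i := by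
    intro i
    match i with
    | 0 => simp [hf0]
    | 1 => exact hc1
    | (n + 2) => exact hdvd _ (by omega)
  obtain ⟨g, hg⟩ := (Polynomial.C_dvd_iff_dvd_coeff ((δ : ℤ)) f).mpr hall
  have hfg : ∀ x : ℤ, f.eval x = (δ : ℤ) * g.eval x := by
    intro x; have h := congrArg (Polynomial.eval x) hg; simpa using h
  have hδZ : ((δ : ℤ)) ≠ 0 := by exact_mod_cast hδ.ne'
  have hdivg : ∀ x : ℤ, f.eval x / (δ : ℤ) = g.eval x := by
    intro x; rw [hfg]; exact Int.mul_ediv_cancel_left _ hδZ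
  set G : ℕ → ℂ := fun x => e (((g.eval (x : ℤ) : ℤ) : ℝ) / m) with hG_def
  have hFG : ∀ x : ℕ, F x = G x := by
    intro x
    simp only [hF_def, hG_def, hfg]
    congr 1
    rw [hQm]
    push_cast
    field_simp
  have hGm : ∀ x : ℕ, G (x + m) = G x := by
    intro x
    obtain ⟨k, hk⟩ : (m : ℤ) ∣ g.eval ((x : ℤ) + m) - g.eval (x : ℤ) :=
      dvd_trans ⟨1, by ring⟩ (Polynomial.sub_dvd_eval_sub ((x : ℤ) + m) (x : ℤ) g)
    have hk' : g.eval ((x : ℤ) + m) = g.eval (x : ℤ) + m * k := by linarith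
    simp only [hG_def]
    push_cast [hk']
    have h : (((g.eval (x : ℤ) : ℤ) : ℝ) + m * k) / m = ((g.eval (x : ℤ) : ℤ) : ℝ) / m + k := by
      field_simp
    rw [h, e_add_int]
  calc ∑ x ∈ Icc 1 Q, F x = ∑ x ∈ Icc 1 (δ * m), G x := by
        rw [← hQm]; exact Finset.sum_congr rfl fun x _ => hFG x
    _ = (δ : ℂ) * ∑ x ∈ Icc 1 m, G x := sum_blocks G m hGm δ
    _ = (δ : ℂ) * ∑ x ∈ Icc 1 (Q / δ),
          e (((f.eval (x : ℤ) / (δ : ℤ) : ℤ) : ℝ) / ((Q / δ : ℕ) : ℝ)) := by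
        congr 1
        exact Finset.sum_congr rfl fun x _ => by rw [hdivg]
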